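/- Zero exploitability characterizes Nash equilibrium strategies: in a finite two-player zero-sum game, a mixed strategy p of player 1 satisfies sInf {u(p, q) | q a mixed strategy of player 2} = sSup {sInf {u(p', q) | q a mixed strategy of player 2} | p' a mixed strategy of player 1} if and only if there exists a mixed strategy q of player 2 such that (p, q) is a Nash equilibrium. -/

import Mathlib

/-- A mixed strategy over a finite action set. -/
def IsMixed {I : Type*} [Fintype I] (p : I → ℝ) : Prop :=
  (∀ i, 0 ≤ p i) ∧ ∑ i, p i = 1

/-- Expected payoff to player 1 in the two-player zero-sum game with payoff matrix `A`. -/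
def u {I J : Type*} [Fintype I] [Fintype J] (A : I → J → ℝ)
    (p : I → ℝ) (q : J → ℝ) : ℝ :=
  ∑ i, ∑ j, p i * A i j * q j

/-- A Nash equilibrium in mixed strategies. -/
def IsNash {I J : Type*} [Fintype I] [Fintype J] (A : I → J → ℝ)
    (p : I → ℝ) (q : J → ℝ) : Prop :=
  IsMixed p ∧ IsMixed q ∧
    (∀ p' : I → ℝ, IsMixed p' → u A p' q ≤ u A p q) ∧
    (∀ q' : J → ℝ, IsMixed q' → u A p q ≤ u A p q')

set_option linter.unusedSectionVars false

section aux
variable {I J : Type*} [Fintype I] [Fintype J]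

lemma isMixed_iff (p : I → ℝ) : IsMixed p ↔ p ∈ stdSimplex ℝ I := Iff.rfl

/-- the column mix `A q` -/
noncomputable def Bv (A : I → J → ℝ) (q : J → ℝ) : I → ℝ := fun i => ∑ j, A i j * q j

lemma u_eq (A : I → J → ℝ) (p : I → ℝ) (q : J → ℝ) :
    u A p q = ∑ i, p i * Bv A q i := by
  simp [u, Bv, Finset.mul_sum, mul_assoc]

lemma wavg_le {p : I → ℝ} (hp : IsMixed p) {c : I → ℝ} {M : ℝ} (hM : ∀ i, c i ≤ M) :
    ∑ i, p i * c i ≤ M := by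
  calc ∑ i, p i * c i ≤ ∑ i, p i * M :=
        Finset.sum_le_sum fun i _ => mul_le_mul_of_nonneg_left (hM i) (hp.1 i)
  _ = M := by rw [← Finset.sum_mul, hp.2, one_mul]

lemma le_wavg {p : I → ℝ} (hp : IsMixed p) {c : I → ℝ} {M : ℝ} (hM : ∀ i, M ≤ c i) :
    M ≤ ∑ i, p i * c i := by
  calc M = ∑ i, p i * M := by rw [← Finset.sum_mul, hp.2, one_mul]
  _ ≤ ∑ i, p i * c i :=
        Finset.sum_le_sum fun i _ => mul_le_mul_of_nonneg_left (hM i) (hp.1 i)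

lemma continuous_u_right (A : I → J → ℝ) (p : I → ℝ) :
    Continuous (fun q : J → ℝ => u A p q) := by
  unfold u
  exact continuous_finset_sum _ fun i _ =>
    continuous_finset_sum _ fun j _ => continuous_const.mul (continuous_apply j)

lemma continuous_Bv_apply (A : I → J → ℝ) (i : I) :
    Continuous (fun q : J → ℝ => Bv A q i) := by
  unfold Bv
  exact continuous_finset_sum _ fun j _ => continuous_const.mul (continuous_apply j)

variable [Nonempty I] [Nonempty J]

/-- the set of payoffs of `p` against mixed replies -/
def Sset (A : I → J → ℝ) (p : I → ℝ) : Set ℝ := {x | ∃ q, IsMixed q ∧ u A p q = x}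

lemma Sset_eq_image (A : I → J → ℝ) (p : I → ℝ) :
    Sset A p = (fun q => u A p q) '' stdSimplex ℝ J := by
  ext x; constructor
  · rintro ⟨q, hq, rfl⟩; exact ⟨q, hq, rfl⟩
  · rintro ⟨q, hq, rfl⟩; exact ⟨q, hq, rfl⟩

lemma Sset_nonempty (A : I → J → ℝ) (p : I → ℝ) : (Sset A p).Nonempty := by
  rw [Sset_eq_image]
  classical
  exact Set.Nonempty.image _ ⟨_, ite_eq_mem_stdSimplex ℝ (Classical.arbitrary J)⟩

lemma Sset_compact (A : I → J → ℝ) (p : I → ℝ) : IsCompact (Sset A p) := by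
  rw [Sset_eq_image]
  exact (isCompact_stdSimplex ℝ J).image (continuous_u_right A p)

lemma sInf_Sset_le (A : I → J → ℝ) (p : I → ℝ) {q : J → ℝ} (hq : IsMixed q) :
    sInf (Sset A p) ≤ u A p q :=
  csInf_le (Sset_compact A p).bddBelow ⟨q, hq, rfl⟩

lemma sInf_Sset_mem (A : I → J → ℝ) (p : I → ℝ) : sInf (Sset A p) ∈ Sset A p :=
  (Sset_compact A p).sInf_mem (Sset_nonempty A p)

end aux

section minimax
variable {I J : Type*} [Fintype I] [Fintype J] [Nonempty I] [Nonempty J]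

lemma continuous_g (A : I → J → ℝ) :
    Continuous (fun q : J → ℝ => Finset.univ.sup' Finset.univ_nonempty (Bv A q)) := by
  rw [continuous_iff_continuousAt]
  intro q
  exact Filter.Tendsto.finset_sup'_nhds_apply Finset.univ_nonempty
    (fun i _ => ((continuous_Bv_apply A i).tendsto q))

theorem minimax (A : I → J → ℝ) :
    ∃ (v : ℝ) (pstar : I → ℝ) (qstar : J → ℝ), IsMixed pstar ∧ IsMixed qstar ∧
      (∀ q : J → ℝ, IsMixed q → v ≤ u A pstar q) ∧
      (∀ p' : I → ℝ, IsMixed p' → u A p' qstar ≤ v) := by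
  classical
  set g := fun q : J → ℝ => Finset.univ.sup' Finset.univ_nonempty (Bv A q) with hgdef
  obtain ⟨qstar, hqstar, hmin⟩ := (isCompact_stdSimplex ℝ J).exists_isMinOn
    ⟨_, ite_eq_mem_stdSimplex ℝ (Classical.arbitrary J)⟩ (continuous_g A).continuousOn
  set v := g qstar with hvdef
  have h2 : ∀ p' : I → ℝ, IsMixed p' → u A p' qstar ≤ v := by
    intro p' hp'
    rw [u_eq]
    exact wavg_le hp' (fun i => Finset.le_sup' _ (Finset.mem_univ i))
  -- separation setup
  set O : Set (I → ℝ) := {y | ∀ i, y i < v} with hOdef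
  have hOi : O = ⋂ i, {y : I → ℝ | y i < v} := by ext y; simp [hOdef]
  have hOopen : IsOpen O := by
    rw [hOi]; exact isOpen_iInter_of_finite fun i =>
      isOpen_lt (continuous_apply i) continuous_const
  have hOconv : Convex ℝ O := by
    rw [hOi]
    exact convex_iInter fun i => convex_halfSpace_lt
      ⟨fun a b => rfl, fun c a => rfl⟩ v
  set S : Set (I → ℝ) := Bv A '' stdSimplex ℝ J with hSdef
  have hBlin : IsLinearMap ℝ (Bv A) := by
    constructor
    · intro q q'; funext i
      simp [Bv, mul_add, Finset.sum_add_distrib]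
    · intro c q; funext i
      simp only [Bv, Pi.smul_apply, smul_eq_mul, Finset.mul_sum]
      exact Finset.sum_congr rfl fun j _ => by ring
  have hSconv : Convex ℝ S := (convex_stdSimplex ℝ J).is_linear_image hBlin
  have hdisj : Disjoint O S := by
    rw [Set.disjoint_left]
    rintro y hy ⟨q, hq, rfl⟩
    obtain ⟨i, _, hi⟩ := Finset.exists_mem_eq_sup' (Finset.univ_nonempty (α := I)) (Bv A q)
    have h1 : v ≤ Finset.univ.sup' Finset.univ_nonempty (Bv A q) := hmin hq
    have h2 : Bv A q i < v := hy i
    rw [hi] at h1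
    linarith
  obtain ⟨f, c, hfo, hfs⟩ := geometric_hahn_banach_open hOconv hOopen hSconv hdisj
  set w : I → ℝ := fun i => f (fun j => if i = j then 1 else 0) with hwdef
  have hrep : ∀ y : I → ℝ, f y = ∑ i, y i * w i := by
    intro y
    conv_lhs => rw [pi_eq_sum_univ y]
    rw [map_sum]
    exact Finset.sum_congr rfl fun i _ => by rw [map_smul, smul_eq_mul]
  have hy0 : (fun _ : I => v - 1) ∈ O := fun i => by norm_num
  have hy0c : f (fun _ : I => v - 1) < c := hfo _ hy0
  -- nonnegativity of w
  have hwnn : ∀ i, 0 ≤ w i := by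
    intro i
    by_contra hneg
    push_neg at hneg
    set y0 : I → ℝ := fun _ => v - 1 with hy0def
    set t : ℝ := (c - f y0 + 1) / (-w i) with htdef
    have ht : 0 < t := div_pos (by linarith) (by linarith)
    have htw : t * w i = -(c - f y0 + 1) := by
      have h' : t * (-w i) = c - f y0 + 1 := div_mul_cancel₀ _ (by linarith)
      rw [mul_neg] at h'
      linarith
    set e : I → ℝ := fun j => if i = j then 1 else 0 with hedef
    set yt : I → ℝ := y0 - t • e with hytdef
    have hytO : yt ∈ O := by
      intro j
      simp only [hytdef, hedef, hy0def, Pi.sub_apply, Pi.smul_apply, smul_eq_mul]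
      rcases eq_or_ne i j with rfl | hij
      · simp; linarith
      · simp [hij]
    have hfyt : f yt = f y0 - t * w i := by
      rw [hytdef, map_sub, map_smul, smul_eq_mul, hwdef]
    have := hfo yt hytO
    rw [hfyt, htw] at this
    linarith
  -- positivity of the total mass
  set s0 : ℝ := ∑ i, w i with hs0def
  have hs0nn : 0 ≤ s0 := Finset.sum_nonneg fun i _ => hwnn i
  have hSne : (Bv A (fun j => if Classical.arbitrary J = j then 1 else 0)) ∈ S :=
    ⟨_, ite_eq_mem_stdSimplex ℝ (Classical.arbitrary J), rfl⟩
  have hs0pos : 0 < s0 := by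
    rcases hs0nn.lt_or_eq with h | h
    · exact h
    have hall : ∀ i ∈ Finset.univ, w i = 0 :=
      (Finset.sum_eq_zero_iff_of_nonneg (fun i _ => hwnn i)).1 h.symm
    have hf0 : ∀ y : I → ℝ, f y = 0 := by
      intro y
      rw [hrep]
      exact Finset.sum_eq_zero fun i _ => by rw [hall i (Finset.mem_univ i), mul_zero]
    have h1 : (0 : ℝ) < c := by have := hy0c; rw [hf0] at this; linarith
    have h2 : c ≤ 0 := by have := hfs _ hSne; rw [hf0] at this; linarith
    linarith
  -- c ≥ v * s0
  have hcv : v * s0 ≤ c := by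
    by_contra hcon
    push_neg at hcon
    set ε : ℝ := (v * s0 - c) / (2 * s0) with hεdef
    have hε : 0 < ε := div_pos (by linarith) (by linarith)
    have hmem : (fun _ : I => v - ε) ∈ O := fun i => by simp; linarith
    have := hfo _ hmem
    rw [hrep] at this
    have heq : ∑ i, (v - ε) * w i = (v - ε) * s0 := by
      rw [← Finset.mul_sum]
    rw [heq] at this
    have hεs : ε * s0 = (v * s0 - c) / 2 := by
      rw [hεdef]; field_simp
    nlinarith
  refine ⟨v, fun i => w i / s0, qstar, ⟨fun i => div_nonneg (hwnn i) hs0nn, ?_⟩,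
    hqstar, ?_, h2⟩
  · rw [← Finset.sum_div, ← hs0def, div_self hs0pos.ne']
  · intro q hq
    have hc : c ≤ ∑ i, Bv A q i * w i := by
      have := hfs _ (⟨q, hq, rfl⟩ : Bv A q ∈ S)
      rwa [hrep] at this
    rw [u_eq]
    have heq : ∑ i, (w i / s0) * Bv A q i = (∑ i, Bv A q i * w i) / s0 := by
      rw [Finset.sum_div]
      exact Finset.sum_congr rfl fun i _ => by ring
    rw [heq]
    rw [le_div_iff₀ hs0pos]
    linarith

end minimax

theorem zero_exploitability_iff_nash {I J : Type*} [Fintype I] [Fintype J]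
    [Nonempty I] [Nonempty J] (A : I → J → ℝ)
    (p : I → ℝ) (hp : IsMixed p) :
    sInf {x : ℝ | ∃ q : J → ℝ, IsMixed q ∧ u A p q = x} =
      sSup {x : ℝ | ∃ p' : I → ℝ, IsMixed p' ∧
        sInf {y : ℝ | ∃ q : J → ℝ, IsMixed q ∧ u A p' q = y} = x} ↔
    ∃ q : J → ℝ, IsNash A p q := by
  obtain ⟨v, pstar, qstar, hps, hqs, hps2, hqs2⟩ := minimax A
  have hset : ∀ p' : I → ℝ, {x : ℝ | ∃ q : J → ℝ, IsMixed q ∧ u A p' q = x} = Sset A p' :=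
    fun _ => rfl
  have hTset : {x : ℝ | ∃ p' : I → ℝ, IsMixed p' ∧
      sInf {y : ℝ | ∃ q : J → ℝ, IsMixed q ∧ u A p' q = y} = x} =
      {x : ℝ | ∃ p' : I → ℝ, IsMixed p' ∧ sInf (Sset A p') = x} := rfl
  rw [hset, hTset]
  set T := {x : ℝ | ∃ p' : I → ℝ, IsMixed p' ∧ sInf (Sset A p') = x} with hTdef
  have hTbdd : BddAbove T := by
    refine ⟨v, ?_⟩
    rintro x ⟨p', hp', rfl⟩
    exact le_trans (sInf_Sset_le A p' hqs) (hqs2 p' hp')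
  have hvmem : sInf (Sset A pstar) = v := by
    refine le_antisymm (le_trans (sInf_Sset_le A pstar hqs) (hqs2 pstar hps)) ?_
    refine le_csInf (Sset_nonempty A pstar) ?_
    rintro x ⟨q, hq, rfl⟩
    exact hps2 q hq
  have hVv : sSup T = v := by
    refine le_antisymm (csSup_le ⟨v, pstar, hps, hvmem⟩ ?_) (le_csSup hTbdd ⟨pstar, hps, hvmem⟩)
    rintro x ⟨p', hp', rfl⟩
    exact le_trans (sInf_Sset_le A p' hqs) (hqs2 p' hp')
  constructor
  · intro h
    have h' : sInf (Sset A p) = v := h.trans hVv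
    have hpv : u A p qstar = v :=
      le_antisymm (hqs2 p hp) (h' ▸ sInf_Sset_le A p hqs)
    refine ⟨qstar, hp, hqs, ?_, ?_⟩
    · intro p' hp'
      rw [hpv]; exact hqs2 p' hp'
    · intro q' hq'
      rw [hpv, ← h']
      exact sInf_Sset_le A p hq'
  · rintro ⟨q, _, hq, hbr1, hbr2⟩
    have h1 : sInf (Sset A p) = u A p q := by
      refine le_antisymm (sInf_Sset_le A p hq) (le_csInf (Sset_nonempty A p) ?_)
      rintro x ⟨q', hq', rfl⟩
      exact hbr2 q' hq'
    rw [h1]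
    refine le_antisymm (le_csSup hTbdd ⟨p, hp, h1⟩) (csSup_le ⟨_, p, hp, h1⟩ ?_)
    rintro x ⟨p', hp', rfl⟩
    exact le_trans (sInf_Sset_le A p' hq) (hbr1 p' hp')
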